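/- If u_n^{(ν)} ≥ 0 are nonnegative reals indexed by n, ν ≥ 1, K is a compact metrizable abelian group, ξ ∈ K has dense orbit {nξ : n ≥ 1} in K, and (i) ∑_{n≥1} u_n^{(ν)} → C ∈ ℝ₊ as ν → ∞, (ii) ∑_{n≥1} |u_n^{(ν)} − u_{n+1}^{(ν)}| → 0 as ν → ∞, then for every Borel set U ⊆ K with m_K(∂U) = 0, ∑_{n≥1} u_n^{(ν)} 1_U(x + nξ) → C·m_K(U) as ν → ∞, uniformly in x ∈ K, where m_K is normalized Haar measure. -/

import Mathlib

open MeasureTheory Filter Topology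

section aux
set_option linter.unusedSectionVars false
variable {K : Type*} [AddCommGroup K] [TopologicalSpace K] [IsTopologicalAddGroup K]
    [CompactSpace K] [TopologicalSpace.MetrizableSpace K]
    [MeasurableSpace K] [BorelSpace K]

lemma aux_unifcont (f : K → ℝ) (hf : Continuous f) {δ : ℝ} (hδ : 0 < δ) :
    ∃ V : Set K, IsOpen V ∧ (0:K) ∈ V ∧ ∀ a v : K, v ∈ V → |f (a + v) - f a| ≤ δ := by
  letI : UniformSpace K := IsTopologicalAddGroup.rightUniformSpace K
  have hUC : UniformContinuous f := CompactSpace.uniformContinuous_of_continuous hf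
  have h1 : {p : ℝ × ℝ | dist p.1 p.2 < δ} ∈ uniformity ℝ := Metric.dist_mem_uniformity hδ
  have h2 : (fun p : K × K => (f p.1, f p.2)) ⁻¹' {p : ℝ × ℝ | dist p.1 p.2 < δ} ∈ uniformity K :=
    hUC h1
  rw [uniformity_eq_comap_nhds_zero' K, Filter.mem_comap] at h2
  obtain ⟨T, hT, hTsub⟩ := h2
  obtain ⟨V, hVT, hVopen, hV0⟩ := mem_nhds_iff.mp hT
  refine ⟨V, hVopen, hV0, fun a v hv => ?_⟩
  have hmem : (a, a + v) ∈ (fun p : K × K => p.2 + -p.1) ⁻¹' T := by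
    simp only [Set.mem_preimage]
    have h : a + v + -a = v := by abel
    rw [h]; exact hVT hv
  have := hTsub hmem
  simp only [Set.mem_preimage, Set.mem_setOf_eq, Real.dist_eq] at this
  rw [abs_sub_comm] at this
  exact le_of_lt this

lemma aux_birkhoff_cont (μ : Measure K) [μ.IsAddHaarMeasure] [IsProbabilityMeasure μ]
    (ξ : K) (hξ : Dense (Set.range fun n : ℕ => (n + 1) • ξ))
    (f : K → ℝ) (hf : Continuous f) {δ : ℝ} (hδ : 0 < δ) :
    ∃ M : ℕ, 1 ≤ M ∧ ∀ m, M ≤ m → ∀ y : K,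
      |(∑ j ∈ Finset.range m, f (y + j • ξ)) / m - ∫ x, f x ∂μ| ≤ δ := by
  obtain ⟨V, hVopen, hV0, hVf⟩ := aux_unifcont f hf (by positivity : (0:ℝ) < δ/3)
  -- finite subcover
  set O : ℕ → Set K := fun n => (fun z => z - (n + 1) • ξ) ⁻¹' V with hO
  have hOopen : ∀ n, IsOpen (O n) := fun n =>
    hVopen.preimage (continuous_id.sub continuous_const)
  have hcov : (Set.univ : Set K) ⊆ ⋃ n, O n := by
    intro z _
    have hWopen : IsOpen ((fun w => z - w) ⁻¹' V) :=
      hVopen.preimage (continuous_const.sub continuous_id)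
    have hWne : z ∈ (fun w => z - w) ⁻¹' V := by
      simp only [Set.mem_preimage, sub_self]; exact hV0
    obtain ⟨w, ⟨n, hwn⟩, hwV⟩ := hξ.exists_mem_open hWopen ⟨z, hWne⟩
    exact Set.mem_iUnion.mpr ⟨n, by simp only [hO, Set.mem_preimage]; rw [← hwn] at hwV; exact hwV⟩
  obtain ⟨t, ht⟩ := isCompact_univ.elim_finite_subcover O hOopen hcov
  set N₀ : ℕ := t.sup id + 1 with hN₀
  -- bound on f
  have : Nonempty K := ⟨0⟩
  obtain ⟨x₀, hx₀⟩ := hf.abs.exists_forall_ge (by rw [Filter.cocompact_eq_bot]; exact tendsto_bot)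
  set B : ℝ := |f x₀| with hB
  have hB0 : 0 ≤ B := abs_nonneg _
  have hfB : ∀ x, |f x| ≤ B := fun x => hx₀ x
  -- choose M
  obtain ⟨M₁, hM₁⟩ := exists_nat_gt (6 * B * N₀ / δ)
  set M := max M₁ 1 with hM
  refine ⟨M, le_max_right _ _, fun m hm y => ?_⟩
  have hm1 : 1 ≤ m := le_trans (le_max_right _ _) hm
  have hmpos : (0:ℝ) < m := by exact_mod_cast hm1
  set S : K → ℝ := fun y => ∑ j ∈ Finset.range m, f (y + j • ξ) with hS
  -- shift estimate
  have hshift1 : ∀ y : K, S (y + ξ) - S y = f (y + m • ξ) - f y := by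
    intro y
    have h1 : S (y + ξ) = ∑ j ∈ Finset.range m, f (y + (j + 1) • ξ) := by
      apply Finset.sum_congr rfl; intro j _
      congr 1
      rw [add_nsmul, one_nsmul]; abel
    have h2 : ∑ j ∈ Finset.range (m+1), f (y + j • ξ)
        = (∑ j ∈ Finset.range m, f (y + (j+1) • ξ)) + f (y + 0 • ξ) :=
      Finset.sum_range_succ' _ m
    have h3 : ∑ j ∈ Finset.range (m+1), f (y + j • ξ) = S y + f (y + m • ξ) :=
      Finset.sum_range_succ _ m
    have h4 : f (y + 0 • ξ) = f y := by rw [zero_nsmul, add_zero]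
    rw [h1]
    have := h2.symm.trans h3
    rw [h4] at this
    linarith
  have hshift : ∀ k : ℕ, ∀ y : K, |S (y + k • ξ) - S y| ≤ 2 * B * k := by
    intro k
    induction k with
    | zero => intro y; simp [zero_nsmul]
    | succ k ih =>
      intro y
      have e1 : y + (k+1) • ξ = (y + ξ) + k • ξ := by
        rw [add_nsmul, one_nsmul]; abel
      have h1 := ih (y + ξ)
      have h2 : |S (y + ξ) - S y| ≤ 2 * B := by
        rw [hshift1 y]
        calc |f (y + m • ξ) - f y| ≤ |f (y + m • ξ)| + |f y| := abs_sub _ _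
        _ ≤ B + B := add_le_add (hfB _) (hfB _)
        _ = 2 * B := by ring
      rw [e1]
      push_cast
      calc |S ((y + ξ) + k • ξ) - S y|
          ≤ |S ((y + ξ) + k • ξ) - S (y + ξ)| + |S (y + ξ) - S y| := abs_sub_le _ _ _
        _ ≤ 2 * B * k + 2 * B := add_le_add h1 h2
        _ = 2 * B * ((k:ℝ) + 1) := by ring
  -- V-continuity of S
  have hSV : ∀ a v : K, v ∈ V → |S (a + v) - S a| ≤ m * (δ/3) := by
    intro a v hv
    have : S (a + v) - S a = ∑ j ∈ Finset.range m, (f ((a + j • ξ) + v) - f (a + j • ξ)) := by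
      rw [hS]; simp only
      rw [← Finset.sum_sub_distrib]
      apply Finset.sum_congr rfl; intro j _
      congr 2
      abel
    rw [this]
    calc |∑ j ∈ Finset.range m, (f ((a + j • ξ) + v) - f (a + j • ξ))|
        ≤ ∑ j ∈ Finset.range m, |f ((a + j • ξ) + v) - f (a + j • ξ)| :=
          Finset.abs_sum_le_sum_abs _ _
      _ ≤ ∑ _j ∈ Finset.range m, (δ/3) := Finset.sum_le_sum fun j _ => hVf _ _ hv
      _ = m * (δ/3) := by rw [Finset.sum_const, Finset.card_range, nsmul_eq_mul]
  -- pairwise bound on averages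
  have hpair : ∀ x y : K, |S y / m - S x / m| ≤ δ/3 + 2 * B * N₀ / m := by
    intro x y
    obtain ⟨n, hnt, hn⟩ : ∃ n ∈ t, (y - x) ∈ O n := by
      have := ht (Set.mem_univ (y - x))
      simpa only [Set.mem_iUnion, exists_prop] using this
    have hv : y - (x + (n+1) • ξ) ∈ V := by
      have : (y - x) - (n+1) • ξ ∈ V := hn
      have e : (y - x) - (n+1) • ξ = y - (x + (n+1) • ξ) := by abel
      rwa [e] at this
    have e2 : y = (x + (n+1) • ξ) + (y - (x + (n+1) • ξ)) := by abel
    have h1 : |S y - S (x + (n+1) • ξ)| ≤ m * (δ/3) := by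
      nth_rewrite 1 [e2]
      exact hSV _ _ hv
    have hn1 : (n:ℝ) + 1 ≤ N₀ := by
      have : n ≤ t.sup id := Finset.le_sup (f := id) hnt
      have : n + 1 ≤ N₀ := by omega
      exact_mod_cast this
    have h2 : |S (x + (n+1) • ξ) - S x| ≤ 2 * B * N₀ := by
      calc |S (x + (n+1) • ξ) - S x| ≤ 2 * B * (n+1) := by exact_mod_cast hshift (n+1) x
      _ ≤ 2 * B * N₀ := by nlinarith
    have h3 : |S y - S x| ≤ m * (δ/3) + 2 * B * N₀ := by
      calc |S y - S x| ≤ |S y - S (x + (n+1) • ξ)| + |S (x + (n+1) • ξ) - S x| :=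
        abs_sub_le _ _ _
      _ ≤ m * (δ/3) + 2 * B * N₀ := add_le_add h1 h2
    have : S y / m - S x / m = (S y - S x) / m := by ring
    rw [this, abs_div, abs_of_pos hmpos, div_le_iff₀ hmpos]
    calc |S y - S x| ≤ m * (δ/3) + 2 * B * N₀ := h3
    _ = (δ/3 + 2 * B * N₀ / m) * m := by field_simp
  have hsmall : 2 * B * N₀ / m ≤ δ / 3 := by
    have hMm : (M₁ : ℝ) ≤ m := by
      have : M₁ ≤ m := le_trans (le_max_left _ _) hm
      exact_mod_cast this
    have h6 : 6 * B * N₀ / δ < m := lt_of_lt_of_le hM₁ hMm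
    rw [div_le_iff₀ hmpos]
    rw [div_lt_iff₀ hδ] at h6
    nlinarith
  -- integrability and invariance
  have hint : ∀ g : K → ℝ, Continuous g → Integrable g μ := by
    intro g hg
    exact hg.integrable_of_hasCompactSupport (IsCompact.of_isClosed_subset isCompact_univ
      (isClosed_tsupport g) (Set.subset_univ _))
  have hScont : Continuous S := by
    apply continuous_finset_sum
    intro j _
    exact hf.comp (continuous_id.add continuous_const)
  have hinv : ∫ x, S x ∂μ = m * ∫ x, f x ∂μ := by
    rw [hS]
    simp only
    have hintj : ∀ j : ℕ, Integrable (fun x => f (x + j • ξ)) μ := fun j =>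
      hint _ (show Continuous fun x => f (x + j • ξ) from
        hf.comp (continuous_id.add continuous_const))
    rw [integral_finset_sum _ (fun j _ => hintj j)]
    have : ∀ j ∈ Finset.range m, ∫ x, f (x + j • ξ) ∂μ = ∫ x, f x ∂μ := by
      intro j _
      have : (fun x => f (x + j • ξ)) = fun x => f (j • ξ + x) := by
        funext x; rw [add_comm]
      rw [this]
      exact integral_add_left_eq_self (μ := μ) f (j • ξ)
    rw [Finset.sum_congr rfl this, Finset.sum_const, Finset.card_range, nsmul_eq_mul]
  -- final
  have key : ∀ x : K, |S y / m - S x / m| ≤ 2 * δ / 3 := by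
    intro x
    calc |S y / m - S x / m| ≤ δ/3 + 2 * B * N₀ / m := hpair x y
    _ ≤ δ/3 + δ/3 := by linarith
    _ = 2 * δ / 3 := by ring
  have hintS : ∫ x, S x / m ∂μ = ∫ x, f x ∂μ := by
    rw [integral_div, hinv]
    field_simp
  have e3 : S y / m - ∫ x, f x ∂μ = ∫ x, (S y / m - S x / m) ∂μ := by
    rw [integral_sub (integrable_const _) ((hint S hScont).div_const m), integral_const]
    simp only [measure_univ, probReal_univ, ENNReal.toReal_one, smul_eq_mul, one_mul]
    rw [hintS]
  rw [e3]
  calc |∫ x, (S y / m - S x / m) ∂μ| ≤ 2 * δ / 3 := by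
        rw [← Real.norm_eq_abs]
        have hb := norm_integral_le_of_norm_le_const (μ := μ) (C := 2 * δ / 3)
          (f := fun x => S y / m - S x / m)
          (by filter_upwards with x; rw [Real.norm_eq_abs]; exact key x)
        simpa [measure_univ] using hb
    _ ≤ δ := by linarith
lemma aux_birkhoff_ind (μ : Measure K) [μ.IsAddHaarMeasure] [IsProbabilityMeasure μ]
    (ξ : K) (hξ : Dense (Set.range fun n : ℕ => (n + 1) • ξ))
    (U : Set K) (hU : MeasurableSet U) (hbd : μ (frontier U) = 0) {ε : ℝ} (hε : 0 < ε) :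
    ∃ m : ℕ, 1 ≤ m ∧ ∀ y : K,
      |(∑ j ∈ Finset.range m, Set.indicator U (fun _ => (1:ℝ)) (y + j • ξ)) / m
        - (μ U).toReal| ≤ ε := by
  have : Nonempty K := ⟨0⟩
  have hfin : ∀ s : Set K, μ s ≠ ⊤ := fun s => measure_ne_top μ s
  -- measures of closure and interior
  have hclos : μ (closure U) = μ U := by
    have h1 : μ (closure U) ≤ μ U := by
      have : closure U ⊆ U ∪ frontier U := by
        intro x hx
        by_cases h : x ∈ U
        · exact Or.inl h
        · exact Or.inr ⟨hx, fun h' => h (interior_subset h')⟩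
      calc μ (closure U) ≤ μ (U ∪ frontier U) := measure_mono this
        _ ≤ μ U + μ (frontier U) := measure_union_le _ _
        _ = μ U := by rw [hbd, add_zero]
    exact le_antisymm h1 (measure_mono subset_closure)
  have hint : μ (interior U) = μ U := by
    have h1 : μ U ≤ μ (interior U) := by
      have : U ⊆ interior U ∪ frontier U := by
        intro x hx
        by_cases h : x ∈ interior U
        · exact Or.inl h
        · exact Or.inr ⟨subset_closure hx, h⟩
      calc μ U ≤ μ (interior U ∪ frontier U) := measure_mono this
        _ ≤ μ (interior U) + μ (frontier U) := measure_union_le _ _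
        _ = μ (interior U) := by rw [hbd, add_zero]
    exact le_antisymm (measure_mono interior_subset) h1
  have hε2 : (0:ℝ) < ε/2 := by linarith
  have hε2' : ENNReal.ofReal (ε/2) ≠ 0 := by
    simp only [ne_eq, ENNReal.ofReal_eq_zero, not_le]; exact hε2
  -- outer approximation: open V₀ ⊇ closure U
  obtain ⟨Vo, hVoU, hVoopen, hVolt⟩ := Set.exists_isOpen_lt_of_lt (μ := μ) (closure U)
    (μ (closure U) + ENNReal.ofReal (ε/2))
    (ENNReal.lt_add_right (hfin _) hε2')
  -- inner approximation: closed F ⊆ interior U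
  obtain ⟨F, hFU, hFclosed, hFlt⟩ := ((isOpen_interior (s := U)).measurableSet).exists_isClosed_lt_add (hfin _) hε2'
  -- Urysohn functions
  obtain ⟨g, hg0, hg1, hgIcc⟩ := exists_continuous_zero_one_of_isCompact'
    ((isClosed_closure (s := U)).isCompact) (hVoopen.isClosed_compl)
    (by rw [Set.disjoint_compl_right_iff_subset]; exact hVoU)
  obtain ⟨f, hf0, hf1, hfIcc⟩ := exists_continuous_zero_one_of_isCompact'
    (hFclosed.isCompact) ((isOpen_interior (s := U)).isClosed_compl)
    (by rw [Set.disjoint_compl_right_iff_subset]; exact hFU)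
  -- pointwise comparisons
  set ind : K → ℝ := Set.indicator U (fun _ => (1:ℝ)) with hind
  have hind01 : ∀ x, 0 ≤ ind x ∧ ind x ≤ 1 := by
    intro x
    rw [hind]
    by_cases h : x ∈ U
    · rw [Set.indicator_of_mem h]; exact ⟨zero_le_one, le_refl _⟩
    · rw [Set.indicator_of_notMem h]; exact ⟨le_refl _, zero_le_one⟩
  have hgle : ∀ x, ind x ≤ g x := by
    intro x
    by_cases h : x ∈ U
    · rw [hind, Set.indicator_of_mem h]
      rw [hg1 (subset_closure h)]; rfl
    · rw [hind, Set.indicator_of_notMem h]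
      exact (hgIcc x).1
  have hfle : ∀ x, f x ≤ ind x := by
    intro x
    by_cases h : x ∈ interior U
    · rw [hind, Set.indicator_of_mem (interior_subset h)]
      exact (hfIcc x).2
    · have : f x = 0 := hf0 h
      rw [this]; exact (hind01 x).1
  -- integral bounds
  have hineq1 : (μ Vo).toReal ≤ (μ U).toReal + ε/2 := by
    have h1 : (μ Vo).toReal ≤ (μ (closure U) + ENNReal.ofReal (ε/2)).toReal :=
      ENNReal.toReal_mono (by simp [ENNReal.add_ne_top, hfin _]) hVolt.le
    rwa [ENNReal.toReal_add (hfin _) ENNReal.ofReal_ne_top, ENNReal.toReal_ofReal hε2.le,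
      hclos] at h1
  have hineq2 : (μ U).toReal ≤ (μ F).toReal + ε/2 := by
    have h1 : (μ (interior U)).toReal ≤ (μ F + ENNReal.ofReal (ε/2)).toReal :=
      ENNReal.toReal_mono (by simp [ENNReal.add_ne_top, hfin _]) hFlt.le
    rwa [ENNReal.toReal_add (hfin _) ENNReal.ofReal_ne_top, ENNReal.toReal_ofReal hε2.le,
      hint] at h1
  have hcompact : ∀ h : K → ℝ, Continuous h → Integrable h μ := fun h hh =>
    hh.integrable_of_hasCompactSupport (IsCompact.of_isClosed_subset isCompact_univ
      (isClosed_tsupport h) (Set.subset_univ _))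
  have hgint : ∫ x, g x ∂μ ≤ (μ U).toReal + ε/2 := by
    have h1 : ∫ x, g x ∂μ ≤ ∫ x, Set.indicator Vo (fun _ => (1:ℝ)) x ∂μ := by
      apply integral_mono (hcompact g g.continuous)
        ((integrable_const (1:ℝ)).indicator hVoopen.measurableSet)
      intro x
      by_cases h : x ∈ Vo
      · rw [Set.indicator_of_mem h]; exact (hgIcc x).2
      · rw [Set.indicator_of_notMem h]
        rw [hg0 h]; rfl
    rw [integral_indicator_const (1:ℝ) hVoopen.measurableSet] at h1
    simp only [smul_eq_mul, mul_one] at h1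
    exact le_trans h1 hineq1
  have hfint : (μ U).toReal - ε/2 ≤ ∫ x, f x ∂μ := by
    have h1 : ∫ x, Set.indicator F (fun _ => (1:ℝ)) x ∂μ ≤ ∫ x, f x ∂μ := by
      apply integral_mono ((integrable_const (1:ℝ)).indicator hFclosed.measurableSet)
        (hcompact f f.continuous)
      intro x
      by_cases h : x ∈ F
      · rw [Set.indicator_of_mem h]
        rw [hf1 h]; rfl
      · rw [Set.indicator_of_notMem h]; exact (hfIcc x).1
    rw [integral_indicator_const (1:ℝ) hFclosed.measurableSet] at h1
    simp only [smul_eq_mul, mul_one] at h1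
    rw [measureReal_def] at h1
    linarith
  -- Birkhoff for f and g
  obtain ⟨Mg, hMg1, hMg⟩ := aux_birkhoff_cont μ ξ hξ g g.continuous hε2
  obtain ⟨Mf, hMf1, hMf⟩ := aux_birkhoff_cont μ ξ hξ f f.continuous hε2
  refine ⟨max Mg Mf, le_trans hMg1 (le_max_left _ _), fun y => ?_⟩
  set m := max Mg Mf with hm
  have hmpos : (0:ℝ) < m := by
    have : 1 ≤ m := le_trans hMg1 (le_max_left _ _)
    exact_mod_cast this
  have hgbound := hMg m (le_max_left _ _) y
  have hfbound := hMf m (le_max_right _ _) y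
  have hsumle : (∑ j ∈ Finset.range m, ind (y + j • ξ)) / m
      ≤ (∑ j ∈ Finset.range m, g (y + j • ξ)) / m := by
    gcongr with j hj
    exact hgle _
  have hsumge : (∑ j ∈ Finset.range m, f (y + j • ξ)) / m
      ≤ (∑ j ∈ Finset.range m, ind (y + j • ξ)) / m := by
    gcongr with j hj
    exact hfle _
  rw [abs_le] at hgbound hfbound
  rw [abs_le]
  constructor
  · have : (μ U).toReal - ε ≤ (∑ j ∈ Finset.range m, f (y + j • ξ)) / m := by linarith
    linarith [hsumge]
  · have : (∑ j ∈ Finset.range m, g (y + j • ξ)) / m ≤ (μ U).toReal + ε := by linarith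
    linarith [hsumle]

end aux


lemma seq_le (v : ℕ → ℝ) (hv : ∀ n, 0 ≤ v n) (hsv : Summable v)
    (hd : Summable fun n => |v n - v (n + 1)|) (i : ℕ) :
    v i ≤ ∑' n, |v n - v (n + 1)| := by
  set D := ∑' n, |v n - v (n + 1)| with hD
  have h0 : Tendsto v atTop (𝓝 0) := hsv.tendsto_atTop_zero
  have step : ∀ N, v i ≤ v (i + N) + ∑ k ∈ Finset.range N, |v (i + k) - v (i + k + 1)| := by
    intro N; induction N with
    | zero => simp
    | succ N ih =>
      have h1 : v (i + N) ≤ v (i + N + 1) + |v (i + N) - v (i + N + 1)| := by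
        have := le_abs_self (v (i + N) - v (i + N + 1)); linarith
      rw [Finset.sum_range_succ]
      have e : i + (N + 1) = i + N + 1 := by omega
      rw [e]
      linarith
  have key : ∀ N, v i ≤ v (i + N) + D := by
    intro N
    refine le_trans (step N) (add_le_add (le_refl _) ?_)
    have e : ∑ k ∈ Finset.range N, |v (i + k) - v (i + k + 1)|
        = ∑ n ∈ Finset.Ico i (i + N), |v n - v (n + 1)| := by
      rw [Finset.sum_Ico_eq_sum_range]
      simp
    rw [e]
    exact Summable.sum_le_tsum _ (fun n _ => abs_nonneg _) hd
  have hlim : Tendsto (fun N => v (i + N) + D) atTop (𝓝 (0 + D)) := by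
    apply Tendsto.add_const
    have : (fun N => v (i + N)) = v ∘ fun N => N + i := by
      funext N; simp [Nat.add_comm]
    rw [this]
    exact h0.comp (tendsto_add_atTop_nat i)
  have := ge_of_tendsto hlim (Filter.Eventually.of_forall key)
  linarith

lemma seq_diff (v : ℕ → ℝ) (n j : ℕ) :
    |v (n + j) - v n| ≤ ∑ k ∈ Finset.range j, |v (n + k) - v (n + k + 1)| := by
  induction j with
  | zero => simp
  | succ j ih =>
    rw [Finset.sum_range_succ]
    have e : n + (j + 1) = n + j + 1 := by omega
    have h : |v (n + (j + 1)) - v n| ≤ |v (n + j + 1) - v (n + j)| + |v (n + j) - v n| := by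
      rw [e]; exact abs_sub_le _ _ _
    rw [abs_sub_comm (v (n + j + 1)) (v (n + j))] at h
    linarith

lemma seq_main (v b : ℕ → ℝ) (hv : ∀ n, 0 ≤ v n) (hb : ∀ n, 0 ≤ b n ∧ b n ≤ 1)
    (hsv : Summable v) (hd : Summable fun n => |v n - v (n + 1)|) (j : ℕ) :
    |(∑' n, v n * b n) - ∑' n, v n * b (n + j)| ≤ 2 * j * ∑' n, |v n - v (n + 1)| := by
  set D := ∑' n, |v n - v (n + 1)| with hD
  have hD0 : 0 ≤ D := tsum_nonneg fun n => abs_nonneg _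
  have hvD : ∀ i, v i ≤ D := seq_le v hv hsv hd
  have hsum1 : Summable fun n => v n * b n :=
    Summable.of_nonneg_of_le (fun n => mul_nonneg (hv n) (hb n).1)
      (fun n => mul_le_of_le_one_right (hv n) (hb n).2) hsv
  have hsum2 : Summable fun n => v (n + j) * b (n + j) :=
    (summable_nat_add_iff j).mpr hsum1
  have hsum3 : Summable fun n => v n * b (n + j) :=
    Summable.of_nonneg_of_le (fun n => mul_nonneg (hv n) (hb (n + j)).1)
      (fun n => mul_le_of_le_one_right (hv n) (hb (n + j)).2) hsv
  have hdk : ∀ k : ℕ, Summable fun n => |v (n + k) - v (n + k + 1)| := fun k =>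
    (summable_nat_add_iff (f := fun i => |v i - v (i + 1)|) k).mpr hd
  have hdktail : ∀ k : ℕ, (∑' n, |v (n + k) - v (n + k + 1)|) ≤ D := by
    intro k
    have h := Summable.sum_add_tsum_nat_add k hd
    have hpos : 0 ≤ ∑ i ∈ Finset.range k, |v i - v (i + 1)| :=
      Finset.sum_nonneg fun i _ => abs_nonneg _
    rw [hD]
    linarith [h]
  have hw : Summable fun n => ∑ k ∈ Finset.range j, |v (n + k) - v (n + k + 1)| := by
    exact summable_sum fun k _ => hdk k
  have hwle : (∑' n, ∑ k ∈ Finset.range j, |v (n + k) - v (n + k + 1)|) ≤ j * D := by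
    rw [Summable.tsum_finsetSum fun k _ => hdk k]
    calc ∑ k ∈ Finset.range j, ∑' n, |v (n + k) - v (n + k + 1)|
        ≤ ∑ _k ∈ Finset.range j, D := Finset.sum_le_sum fun k _ => hdktail k
      _ = j * D := by rw [Finset.sum_const, Finset.card_range, nsmul_eq_mul]
  have hdiffsum : Summable fun n => |v (n + j) - v n| :=
    Summable.of_nonneg_of_le (fun n => abs_nonneg _) (fun n => seq_diff v n j) hw
  have hdiffle : (∑' n, |v (n + j) - v n|) ≤ j * D :=
    le_trans (Summable.tsum_le_tsum (fun n => seq_diff v n j) hdiffsum hw) hwle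
  -- split
  have split : (∑' n, v n * b n)
      = (∑ i ∈ Finset.range j, v i * b i) + ∑' n, v (n + j) * b (n + j) :=
    (Summable.sum_add_tsum_nat_add j hsum1).symm
  have hheadle : (∑ i ∈ Finset.range j, v i * b i) ≤ j * D := by
    calc ∑ i ∈ Finset.range j, v i * b i
        ≤ ∑ i ∈ Finset.range j, D := Finset.sum_le_sum fun i _ =>
          le_trans (mul_le_of_le_one_right (hv i) (hb i).2) (hvD i)
      _ = j * D := by rw [Finset.sum_const, Finset.card_range, nsmul_eq_mul]
  have hheadpos : 0 ≤ ∑ i ∈ Finset.range j, v i * b i :=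
    Finset.sum_nonneg fun i _ => mul_nonneg (hv i) (hb i).1
  have htailclose : |(∑' n, v (n + j) * b (n + j)) - ∑' n, v n * b (n + j)| ≤ j * D := by
    have hsub : (∑' n, v (n + j) * b (n + j)) - (∑' n, v n * b (n + j))
        = ∑' n, (v (n + j) * b (n + j) - v n * b (n + j)) := (Summable.tsum_sub hsum2 hsum3).symm
    rw [hsub]
    have habs : ∀ n, |v (n + j) * b (n + j) - v n * b (n + j)| ≤ |v (n + j) - v n| := by
      intro n
      have : v (n + j) * b (n + j) - v n * b (n + j) = (v (n + j) - v n) * b (n + j) := by ring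
      rw [this, abs_mul]
      calc |v (n + j) - v n| * |b (n + j)| ≤ |v (n + j) - v n| * 1 := by
            apply mul_le_mul_of_nonneg_left _ (abs_nonneg _)
            rw [abs_of_nonneg (hb (n + j)).1]; exact (hb (n + j)).2
        _ = |v (n + j) - v n| := mul_one _
    have hsub2 : Summable fun n => v (n + j) * b (n + j) - v n * b (n + j) := hsum2.sub hsum3
    calc |∑' n, (v (n + j) * b (n + j) - v n * b (n + j))|
        ≤ ∑' n, |v (n + j) * b (n + j) - v n * b (n + j)| := by
          rw [← Real.norm_eq_abs]
          refine norm_tsum_le_tsum_norm ?_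
          exact (summable_abs_iff.mpr hsub2)
      _ ≤ ∑' n, |v (n + j) - v n| := Summable.tsum_le_tsum habs (summable_abs_iff.mpr hsub2) hdiffsum
      _ ≤ j * D := hdiffle
  calc |(∑' n, v n * b n) - ∑' n, v n * b (n + j)|
      = |(∑ i ∈ Finset.range j, v i * b i)
          + ((∑' n, v (n + j) * b (n + j)) - ∑' n, v n * b (n + j))| := by
        rw [split, add_sub_assoc]
    _ ≤ |∑ i ∈ Finset.range j, v i * b i|
          + |(∑' n, v (n + j) * b (n + j)) - ∑' n, v n * b (n + j)| := abs_add_le _ _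
    _ ≤ j * D + j * D := add_le_add (by rwa [abs_of_nonneg hheadpos]) htailclose
    _ = 2 * j * D := by ring


set_option maxHeartbeats 1000000 in
/-- Equidistribution Lemma: for a compact metrizable abelian group `K` with
normalized Haar measure `μ`, an element `ξ` whose forward orbit `{nξ : n ≥ 1}` is dense,
and nonnegative weights `u ν n` (representing `u_{n+1}^{(ν)}`) with
`∑_n u ν n → C` and `∑_n |u ν n − u ν (n+1)| → 0`, one has
`∑_n u ν n · 1_U(x + (n+1)ξ) → C · μ(U)` uniformly in `x`, for every Borel `U`
with null boundary. -/
theorem equidistribution_lemma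
    {K : Type*} [AddCommGroup K] [TopologicalSpace K] [IsTopologicalAddGroup K]
    [CompactSpace K] [TopologicalSpace.MetrizableSpace K]
    [MeasurableSpace K] [BorelSpace K]
    (μ : Measure K) [μ.IsAddHaarMeasure] [IsProbabilityMeasure μ]
    (ξ : K) (hξ : Dense (Set.range fun n : ℕ => (n + 1) • ξ))
    (u : ℕ → ℕ → ℝ) (hu : ∀ ν n, 0 ≤ u ν n)
    (hsum : ∀ ν, Summable (u ν))
    (hdiff : ∀ ν, Summable fun n => |u ν n - u ν (n + 1)|)
    (C : ℝ) (hC : 0 ≤ C)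
    (h1 : Tendsto (fun ν => ∑' n, u ν n) atTop (𝓝 C))
    (h2 : Tendsto (fun ν => ∑' n, |u ν n - u ν (n + 1)|) atTop (𝓝 0))
    (U : Set K) (hU : MeasurableSet U) (hbd : μ (frontier U) = 0) :
    TendstoUniformly
      (fun ν x => ∑' n, u ν n * Set.indicator U (fun _ => (1 : ℝ)) (x + (n + 1) • ξ))
      (fun _ => C * (μ U).toReal) atTop := by
  have hq0 : 0 ≤ (μ U).toReal := ENNReal.toReal_nonneg
  have hq1 : (μ U).toReal ≤ 1 := by
    have h := ENNReal.toReal_mono (measure_ne_top μ Set.univ) (measure_mono (Set.subset_univ U))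
    rwa [measure_univ, ENNReal.toReal_one] at h
  rw [Metric.tendstoUniformly_iff]
  intro ε hε
  set q := (μ U).toReal with hq
  set ε₁ := ε / (8 * (C + 1 + ε)) with hε₁def
  have hCε : 0 < C + 1 + ε := by linarith
  have hε₁ : 0 < ε₁ := by rw [hε₁def]; positivity
  obtain ⟨m, hm1, hm⟩ := aux_birkhoff_ind μ ξ hξ U hU hbd hε₁
  have hmpos : (0:ℝ) < m := by exact_mod_cast hm1
  have hev1 : ∀ᶠ ν in atTop, |(∑' n, u ν n) - C| < ε/4 := by
    have h := Metric.tendsto_nhds.mp h1 (ε/4) (by linarith)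
    simpa [Real.dist_eq] using h
  have hev2 : ∀ᶠ ν in atTop, (∑' n, |u ν n - u ν (n + 1)|) < ε/(8*m) := by
    have h := Metric.tendsto_nhds.mp h2 (ε/(8*m)) (by positivity)
    filter_upwards [h] with ν hν
    rw [Real.dist_eq, sub_zero, abs_of_nonneg (tsum_nonneg fun n => abs_nonneg _)] at hν
    exact hν
  filter_upwards [hev1, hev2] with ν hν1 hν2
  intro x
  rw [Real.dist_eq]
  set v := u ν with hv
  have hv0 : ∀ n, 0 ≤ v n := hu ν
  have hsv : Summable v := hsum ν
  have hd : Summable fun n => |v n - v (n + 1)| := hdiff ν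
  set D := ∑' n, |v n - v (n + 1)| with hDdef
  have hD0 : 0 ≤ D := tsum_nonneg fun n => abs_nonneg _
  have hDlt : D < ε/(8*m) := hν2
  set b : ℕ → ℝ := fun n => Set.indicator U (fun _ => (1:ℝ)) (x + (n + 1) • ξ) with hb
  have hb01 : ∀ n, 0 ≤ b n ∧ b n ≤ 1 := by
    intro n
    rw [hb]
    by_cases h : (x + (n + 1) • ξ) ∈ U
    · simp only [Set.indicator_of_mem h]; exact ⟨zero_le_one, le_refl _⟩
    · simp only [Set.indicator_of_notMem h]; exact ⟨le_refl _, zero_le_one⟩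
  have hsummul : ∀ c : ℕ → ℝ, (∀ n, 0 ≤ c n ∧ c n ≤ 1) → Summable fun n => v n * c n :=
    fun c hc => Summable.of_nonneg_of_le (fun n => mul_nonneg (hv0 n) (hc n).1)
      (fun n => mul_le_of_le_one_right (hv0 n) (hc n).2) hsv
  have hvb : Summable fun n => v n * b n := hsummul b hb01
  have hvbj : ∀ j : ℕ, Summable fun n => v n * b (n + j) :=
    fun j => hsummul (fun n => b (n + j)) (fun n => hb01 (n + j))
  set A : ℕ → ℝ := fun n => (∑ j ∈ Finset.range m, b (n + j)) / m with hA
  have hA01 : ∀ n, 0 ≤ A n ∧ A n ≤ 1 := by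
    intro n
    rw [hA]
    constructor
    · exact div_nonneg (Finset.sum_nonneg fun j _ => (hb01 (n + j)).1) hmpos.le
    · rw [div_le_one hmpos]
      calc ∑ j ∈ Finset.range m, b (n + j) ≤ ∑ _j ∈ Finset.range m, (1:ℝ) :=
            Finset.sum_le_sum fun j _ => (hb01 (n + j)).2
        _ = m := by rw [Finset.sum_const, Finset.card_range, nsmul_eq_mul, mul_one]
  have hvA : Summable fun n => v n * A n := hsummul A hA01
  have hAclose : ∀ n, |A n - q| ≤ ε₁ := by
    intro n
    have h3 := hm (x + (n + 1) • ξ)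
    have e4 : (∑ j ∈ Finset.range m, Set.indicator U (fun _ => (1:ℝ)) (x + (n + 1) • ξ + j • ξ))
        = ∑ j ∈ Finset.range m, b (n + j) := by
      apply Finset.sum_congr rfl
      intro j _
      have e2 : x + (n + 1) • ξ + j • ξ = x + (n + j + 1) • ξ := by
        rw [add_assoc, ← add_nsmul]
        congr 2
        omega
      rw [e2, hb]
    rw [e4] at h3
    exact h3
  -- Step 1
  have hstep1 : |(∑' n, v n * b n) - ∑' n, v n * A n| ≤ 2 * m * D := by
    have hswap : (∑' n, v n * A n) = (∑ j ∈ Finset.range m, ∑' n, v n * b (n + j)) / m := by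
      have e1 : ∀ n, v n * A n = (∑ j ∈ Finset.range m, v n * b (n + j)) / m := by
        intro n
        rw [hA]
        simp only
        rw [← Finset.mul_sum]
        ring
      rw [tsum_congr e1, tsum_div_const]
      congr 1
      exact Summable.tsum_finsetSum fun j _ => hvbj j
    have hXm : (∑' n, v n * b n) - (∑ j ∈ Finset.range m, ∑' n, v n * b (n + j)) / m
        = (∑ j ∈ Finset.range m, ((∑' n, v n * b n) - ∑' n, v n * b (n + j))) / m := by
      rw [Finset.sum_sub_distrib, Finset.sum_const, Finset.card_range, nsmul_eq_mul]
      field_simp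
    rw [hswap, hXm, abs_div, abs_of_pos hmpos, div_le_iff₀ hmpos]
    calc |∑ j ∈ Finset.range m, ((∑' n, v n * b n) - ∑' n, v n * b (n + j))|
        ≤ ∑ j ∈ Finset.range m, |(∑' n, v n * b n) - ∑' n, v n * b (n + j)| :=
          Finset.abs_sum_le_sum_abs _ _
      _ ≤ ∑ _j ∈ Finset.range m, (2 * m * D) := by
          apply Finset.sum_le_sum
          intro j hj
          refine le_trans (seq_main v b hv0 hb01 hsv hd j) ?_
          have hjm : (j:ℝ) ≤ m := by
            have : j ≤ m := le_of_lt (Finset.mem_range.mp hj)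
            exact_mod_cast this
          nlinarith
      _ = m * (2 * m * D) := by rw [Finset.sum_const, Finset.card_range, nsmul_eq_mul]
      _ = 2 * m * D * m := by ring
  -- Step 2
  have hstep2 : |(∑' n, v n * A n) - (∑' n, v n) * q| ≤ ε₁ * (∑' n, v n) := by
    have hsub := Summable.tsum_sub hvA (hsv.mul_right q)
    rw [tsum_mul_right] at hsub
    rw [← hsub]
    have hptle : ∀ n, |v n * A n - v n * q| ≤ v n * ε₁ := by
      intro n
      have e : v n * A n - v n * q = v n * (A n - q) := by ring
      rw [e, abs_mul, abs_of_nonneg (hv0 n)]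
      exact mul_le_mul_of_nonneg_left (hAclose n) (hv0 n)
    have hsub2 : Summable fun n => v n * A n - v n * q := hvA.sub (hsv.mul_right q)
    calc |∑' n, (v n * A n - v n * q)|
        ≤ ∑' n, |v n * A n - v n * q| := by
          rw [← Real.norm_eq_abs]
          exact norm_tsum_le_tsum_norm (summable_abs_iff.mpr hsub2)
      _ ≤ ∑' n, v n * ε₁ := Summable.tsum_le_tsum hptle (summable_abs_iff.mpr hsub2) (hsv.mul_right ε₁)
      _ = (∑' n, v n) * ε₁ := tsum_mul_right
      _ = ε₁ * (∑' n, v n) := mul_comm _ _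
  -- combine
  set S := ∑' n, v n with hS
  have hS0 : 0 ≤ S := tsum_nonneg hv0
  have hSC : |S - C| < ε/4 := hν1
  have hSle : S ≤ C + 1 + ε := by
    have := abs_lt.mp hSC
    linarith [this.2]
  have hprod1 : 2 * m * D < ε/4 := by
    have h := mul_lt_mul_of_pos_left hDlt (show (0:ℝ) < 2 * m by positivity)
    have e : 2 * (m:ℝ) * (ε/(8*m)) = ε/4 := by field_simp; ring
    linarith [e ▸ h]
  have hprod2 : ε₁ * S ≤ ε/8 := by
    have h := mul_le_mul_of_nonneg_left hSle hε₁.le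
    have e : ε₁ * (C + 1 + ε) = ε/8 := by rw [hε₁def]; field_simp
    linarith [e ▸ h]
  have hprod3 : |S * q - C * q| < ε/4 := by
    have e : S * q - C * q = (S - C) * q := by ring
    rw [e, abs_mul, abs_of_nonneg hq0]
    calc |S - C| * q ≤ |S - C| * 1 := mul_le_mul_of_nonneg_left hq1 (abs_nonneg _)
      _ = |S - C| := mul_one _
      _ < ε/4 := hSC
  have tri : |C * q - ∑' n, v n * b n|
      ≤ |(∑' n, v n * b n) - ∑' n, v n * A n| + |(∑' n, v n * A n) - S * q| + |S * q - C * q| := by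
    rw [abs_sub_comm]
    calc |(∑' n, v n * b n) - C * q|
        ≤ |(∑' n, v n * b n) - ∑' n, v n * A n| + |(∑' n, v n * A n) - C * q| := abs_sub_le _ _ _
      _ ≤ |(∑' n, v n * b n) - ∑' n, v n * A n|
          + (|(∑' n, v n * A n) - S * q| + |S * q - C * q|) := by
          gcongr
          exact abs_sub_le _ _ _
      _ = _ := by ring
  calc |C * q - ∑' n, v n * b n|
      ≤ |(∑' n, v n * b n) - ∑' n, v n * A n| + |(∑' n, v n * A n) - S * q| + |S * q - C * q| :=
        tri
    _ < ε := by
        have g1 := lt_of_le_of_lt hstep1 hprod1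
        have g2 := le_trans hstep2 hprod2
        have g3 := hprod3
        linarith
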